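/- Let A ≪ B in 𝕀ℝ and let g : 𝕀_{[A,B]} → ℝ be continuous with respect to the Moore metric d_M. For n ≥ 1 and 0 ≤ k ≤ n set X_k^{(n)} = A + (k/n)(B−A) = [a̲ + (k/n)(b̲−a̲), ā + (k/n)(b̄−ā)]. Then lim_{n→∞} (1/n) Σ_{k=0}^{n−1} inf{g(X) : X_k^{(n)} ≤ X ≤ X_{k+1}^{(n)}} and lim_{n→∞} (1/n) Σ_{k=0}^{n−1} g(X_k^{(n)}) both exist and are equal to ∫₀¹ g(A + t(B−A)) dt. -/

import Mathlib

/-- `𝕀ℝ`: the set of nonempty closed bounded real intervals, identified with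
pairs `(lo, hi) ∈ ℝ × ℝ` with `lo ≤ hi`.  The subtype order inherited from the
product order on `ℝ × ℝ` is exactly the Kulisch–Miranker order, and the
inherited metric (sup metric of `ℝ × ℝ`) is exactly the Moore metric `d_M`. -/
abbrev IR : Type := {p : ℝ × ℝ // p.1 ≤ p.2}

namespace IR

/-- Left endpoint projection `π₁`. -/
def lo (A : IR) : ℝ := A.val.1

/-- Right endpoint projection `π₂`. -/
def hi (A : IR) : ℝ := A.val.2

/-- The strict Kulisch–Miranker order `A ≪ B`. -/
def sll (A B : IR) : Prop := lo A < lo B ∧ hi A < hi B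

/-- The Moore metric `d_M`. -/
noncomputable def dM (A B : IR) : ℝ := max |lo B - lo A| |hi B - hi A|

/-- `𝕀_{[A,B]} = {X ∈ 𝕀ℝ : A ≤ X ≤ B}`. -/
def box (A B : IR) : Set IR := {X : IR | A ≤ X ∧ X ≤ B}

/-- The interval `[u,v]` (with a junk degenerate value if `u > v`). -/
noncomputable def mkI (u v : ℝ) : IR := if h : u ≤ v then ⟨(u, v), h⟩ else ⟨(u, u), le_rfl⟩

/-- The point `A + t(B - A)` on the segment from `A` to `B`. -/
noncomputable def seg (A B : IR) (t : ℝ) : IR :=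
  mkI (lo A + t * (lo B - lo A)) (hi A + t * (hi B - hi A))

/-- Componentwise infimum of a set of intervals, as a pair of reals. -/
noncomputable def infS (S : Set IR) : ℝ × ℝ := (sInf (lo '' S), sInf (hi '' S))

/-- Componentwise supremum of a set of intervals, as a pair of reals. -/
noncomputable def supS (S : Set IR) : ℝ × ℝ := (sSup (lo '' S), sSup (hi '' S))

/-- A partition `A = P₀ ≪ P₁ ≪ ⋯ ≪ P_N = B` of `𝕀_{[A,B]}`, described by its
parameters `0 = t₀ < t₁ < ⋯ < t_N = 1` (so that `P_k = A + t_k (B - A)`). -/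
structure Partition where
  n : ℕ
  npos : 0 < n
  t : ℕ → ℝ
  t0 : t 0 = 0
  tn : t n = 1
  mono : ∀ i < n, t i < t (i + 1)

/-- The set of parameters of a partition. -/
def Partition.pts (P : Partition) : Set ℝ := P.t '' Set.Iic P.n

/-- The set of points `P_k = A + t_k(B-A)` of a partition of `𝕀_{[A,B]}`. -/
noncomputable def Partition.ipts (A B : IR) (P : Partition) : Set IR :=
  (fun i => seg A B (P.t i)) '' Set.Iic P.n

/-- Lower Riemann sum `σ(F, 𝒫)` (as a pair of reals; interval sums are
componentwise and `λ • [u,v] = [λu, λv]` for the scalars `λ = d_M ≥ 0`). -/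
noncomputable def lowerSum (A B : IR) (F : IR → IR) (P : Partition) : ℝ × ℝ :=
  ∑ k ∈ Finset.range P.n,
    dM (seg A B (P.t k)) (seg A B (P.t (k + 1))) •
      infS (F '' box (seg A B (P.t k)) (seg A B (P.t (k + 1))))

/-- Upper Riemann sum `Σ(F, 𝒫)`. -/
noncomputable def upperSum (A B : IR) (F : IR → IR) (P : Partition) : ℝ × ℝ :=
  ∑ k ∈ Finset.range P.n,
    dM (seg A B (P.t k)) (seg A B (P.t (k + 1))) •
      supS (F '' box (seg A B (P.t k)) (seg A B (P.t (k + 1))))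

/-- The lower integral `∫̲_A^B F(X)dX`: componentwise supremum of the lower
Riemann sums over all partitions. -/
noncomputable def lowerInt (A B : IR) (F : IR → IR) : ℝ × ℝ :=
  (sSup (Set.range fun P : Partition => (lowerSum A B F P).1),
   sSup (Set.range fun P : Partition => (lowerSum A B F P).2))

/-- The upper integral `∫̄_A^B F(X)dX`: componentwise infimum of the upper
Riemann sums over all partitions. -/
noncomputable def upperInt (A B : IR) (F : IR → IR) : ℝ × ℝ :=
  (sInf (Set.range fun P : Partition => (upperSum A B F P).1),
   sInf (Set.range fun P : Partition => (upperSum A B F P).2))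

/-- `F` is bounded on `𝕀_{[A,B]}` (order bounded, equivalently metrically
bounded). -/
def BoundedOn (F : IR → IR) (A B : IR) : Prop :=
  ∃ C D : IR, ∀ X ∈ box A B, C ≤ F X ∧ F X ≤ D

end IR

namespace IRAux
open IR

lemma seg_val (A B : IR) {t : ℝ} (ht : t ∈ Set.Icc (0:ℝ) 1) :
    (seg A B t).val = (lo A + t * (lo B - lo A), hi A + t * (hi B - hi A)) := by
  have hA : lo A ≤ hi A := A.2
  have hB : lo B ≤ hi B := B.2
  have h1 : lo A + t * (lo B - lo A) ≤ hi A + t * (hi B - hi A) := by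
    nlinarith [mul_nonneg ht.1 (sub_nonneg.mpr hB),
      mul_nonneg (sub_nonneg.mpr ht.2) (sub_nonneg.mpr hA)]
  simp [seg, mkI, h1]

lemma seg_mono (A B : IR) (h : sll A B) {s t : ℝ}
    (h0 : 0 ≤ s) (hst : s ≤ t) (h1 : t ≤ 1) : seg A B s ≤ seg A B t := by
  have hs : s ∈ Set.Icc (0:ℝ) 1 := ⟨h0, hst.trans h1⟩
  have htm : t ∈ Set.Icc (0:ℝ) 1 := ⟨h0.trans hst, h1⟩
  rw [← Subtype.coe_le_coe, seg_val A B hs, seg_val A B htm, Prod.le_def]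
  constructor
  · simpa using mul_le_mul_of_nonneg_right hst (sub_nonneg.mpr h.1.le)
  · simpa using mul_le_mul_of_nonneg_right hst (sub_nonneg.mpr h.2.le)

lemma seg_zero (A B : IR) : seg A B 0 = A := by
  apply Subtype.ext
  rw [seg_val A B (by norm_num : (0:ℝ) ∈ Set.Icc (0:ℝ) 1)]
  simp [lo, hi]

lemma seg_one (A B : IR) : seg A B 1 = B := by
  apply Subtype.ext
  rw [seg_val A B (by norm_num : (1:ℝ) ∈ Set.Icc (0:ℝ) 1)]
  simp [lo, hi]

lemma seg_mem (A B : IR) (h : sll A B) {t : ℝ} (ht : t ∈ Set.Icc (0:ℝ) 1) :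
    seg A B t ∈ box A B := by
  constructor
  · have := seg_mono A B h le_rfl ht.1 ht.2
    rwa [seg_zero] at this
  · have := seg_mono A B h ht.1 ht.2 le_rfl
    rwa [seg_one] at this

lemma dist_le_of_box (A B : IR) (h : sll A B) {s t : ℝ}
    (h0 : 0 ≤ s) (hst : s ≤ t) (h1 : t ≤ 1) {X : IR}
    (hX : X ∈ box (seg A B s) (seg A B t)) :
    dist X (seg A B s) ≤ max (lo B - lo A) (hi B - hi A) * (t - s) := by
  have hs : s ∈ Set.Icc (0:ℝ) 1 := ⟨h0, hst.trans h1⟩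
  have htm : t ∈ Set.Icc (0:ℝ) 1 := ⟨h0.trans hst, h1⟩
  obtain ⟨hX1, hX2⟩ := hX
  rw [← Subtype.coe_le_coe, seg_val A B hs, Prod.le_def] at hX1
  rw [← Subtype.coe_le_coe, seg_val A B htm, Prod.le_def] at hX2
  rw [Subtype.dist_eq, Prod.dist_eq, seg_val A B hs]
  dsimp only at hX1 hX2 ⊢
  have hts : 0 ≤ t - s := by linarith
  have c1 : lo B - lo A ≤ max (lo B - lo A) (hi B - hi A) := le_max_left _ _
  have c2 : hi B - hi A ≤ max (lo B - lo A) (hi B - hi A) := le_max_right _ _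
  have hc : 0 ≤ max (lo B - lo A) (hi B - hi A) :=
    le_trans (sub_nonneg.mpr h.1.le) c1
  have m1 := mul_le_mul_of_nonneg_right c1 hts
  have m2 := mul_le_mul_of_nonneg_right c2 hts
  have m0 := mul_nonneg hc hts
  apply max_le
  · rw [Real.dist_eq, abs_sub_le_iff]
    constructor
    · nlinarith [hX1.1, hX2.1]
    · nlinarith [hX1.1, hX2.1]
  · rw [Real.dist_eq, abs_sub_le_iff]
    constructor
    · nlinarith [hX1.2, hX2.2]
    · nlinarith [hX1.2, hX2.2]

lemma cont_seg (A B : IR) : ContinuousOn (fun t => seg A B t) (Set.Icc (0:ℝ) 1) := by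
  rw [Topology.IsEmbedding.subtypeVal.toIsInducing.continuousOn_iff]
  apply ContinuousOn.congr
    (f := fun t : ℝ => (lo A + t * (lo B - lo A), hi A + t * (hi B - hi A)))
  · exact (Continuous.prodMk (by continuity) (by continuity)).continuousOn
  · intro t ht; exact seg_val A B ht

lemma compact_box (A B : IR) : IsCompact (box A B) := by
  have heq : box A B = Subtype.val ⁻¹' (Set.Icc A.val B.val) := by
    ext X
    simp only [box, Set.mem_setOf_eq, Set.mem_preimage, Set.mem_Icc, ← Subtype.coe_le_coe]
  rw [heq]
  have hcl : IsClosed {p : ℝ × ℝ | p.1 ≤ p.2} := isClosed_le continuous_fst continuous_snd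
  exact hcl.isClosedEmbedding_subtypeVal.isCompact_preimage isCompact_Icc

end IRAux

open IR in
/-- Let `A ≪ B` and `g : 𝕀_{[A,B]} → ℝ` be continuous w.r.t. the Moore metric
(the metric of `IR`).  With `X_k^{(n)} = A + (k/n)(B−A)`, both
`(1/n) Σ_{k<n} inf{g(X) : X_k^{(n)} ≤ X ≤ X_{k+1}^{(n)}}` and
`(1/n) Σ_{k<n} g(X_k^{(n)})` converge, as `n → ∞`, to
`∫₀¹ g(A + t(B−A)) dt`. -/
theorem IR.riemann_limits (A B : IR) (h : sll A B) (g : IR → ℝ)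
    (hg : ContinuousOn g (box A B)) :
    Filter.Tendsto
      (fun n : ℕ => (1 / (n : ℝ)) * ∑ k ∈ Finset.range n,
        sInf (g '' box (seg A B ((k : ℝ) / n)) (seg A B (((k : ℝ) + 1) / n))))
      Filter.atTop (nhds (∫ t in (0 : ℝ)..1, g (seg A B t))) ∧
    Filter.Tendsto
      (fun n : ℕ => (1 / (n : ℝ)) * ∑ k ∈ Finset.range n, g (seg A B ((k : ℝ) / n)))
      Filter.atTop (nhds (∫ t in (0 : ℝ)..1, g (seg A B t))) := by
  classical
  set I : ℝ := ∫ t in (0 : ℝ)..1, g (seg A B t) with hIdef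
  have hφc : ContinuousOn (fun t => g (seg A B t)) (Set.Icc (0:ℝ) 1) :=
    hg.comp (IRAux.cont_seg A B) (fun t ht => IRAux.seg_mem A B h ht)
  have hUC := (IRAux.compact_box A B).uniformContinuousOn_of_continuous hg
  rw [Metric.uniformContinuousOn_iff] at hUC
  have hcpos : (0:ℝ) < max (lo B - lo A) (hi B - hi A) :=
    lt_of_lt_of_le (sub_pos.mpr h.1) (le_max_left _ _)
  have hInt : ∀ a b : ℝ, 0 ≤ a → a ≤ b → b ≤ 1 →
      IntervalIntegrable (fun t => g (seg A B t)) MeasureTheory.volume a b := by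
    intro a b ha hab hb
    apply ContinuousOn.intervalIntegrable
    apply hφc.mono
    rw [Set.uIcc_of_le hab]
    exact Set.Icc_subset_Icc ha hb
  have key : ∀ ε > 0, ∃ N : ℕ, ∀ n ≥ N,
      |(1/(n:ℝ)) * (∑ k ∈ Finset.range n, g (seg A B ((k:ℝ)/n))) - I| ≤ ε ∧
      |(1/(n:ℝ)) * (∑ k ∈ Finset.range n,
          sInf (g '' box (seg A B ((k:ℝ)/n)) (seg A B (((k:ℝ)+1)/n))))
        - (1/(n:ℝ)) * (∑ k ∈ Finset.range n, g (seg A B ((k:ℝ)/n)))| ≤ ε := by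
    intro ε hε
    obtain ⟨δ, hδpos, hδ⟩ := hUC ε hε
    refine ⟨⌈max (lo B - lo A) (hi B - hi A) / δ⌉₊ + 1, fun n hn => ?_⟩
    have hn1 : 1 ≤ n := le_trans (Nat.le_add_left 1 _) hn
    have hnR : (0:ℝ) < n := by exact_mod_cast hn1
    have hcn : max (lo B - lo A) (hi B - hi A) / n < δ := by
      rw [div_lt_iff₀ hnR]
      have h1 : max (lo B - lo A) (hi B - hi A) / δ < (n : ℝ) := by
        calc max (lo B - lo A) (hi B - hi A) / δ
            ≤ (⌈max (lo B - lo A) (hi B - hi A) / δ⌉₊ : ℝ) := Nat.le_ceil _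
          _ < (n : ℝ) := by exact_mod_cast Nat.lt_of_lt_of_le (Nat.lt_succ_self _) hn
      rw [div_lt_iff₀ hδpos] at h1
      linarith
    -- per-k facts
    have perk : ∀ k ∈ Finset.range n,
        (0 ≤ (k:ℝ)/n ∧ (k:ℝ)/n ≤ ((k:ℝ)+1)/n ∧ ((k:ℝ)+1)/n ≤ 1) := by
      intro k hk
      have hkn : (k:ℝ) + 1 ≤ n := by
        have := Finset.mem_range.mp hk
        exact_mod_cast Nat.succ_le_of_lt this
      refine ⟨div_nonneg (Nat.cast_nonneg k) hnR.le,
        (div_le_div_iff_of_pos_right hnR).mpr (by linarith), (div_le_one hnR).mpr hkn⟩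
    have claim : ∀ k ∈ Finset.range n, ∀ X ∈ box (seg A B ((k:ℝ)/n)) (seg A B (((k:ℝ)+1)/n)),
        |g X - g (seg A B ((k:ℝ)/n))| < ε := by
      intro k hk X hX
      obtain ⟨hu0, huv, hv1⟩ := perk k hk
      have hsu : seg A B ((k:ℝ)/n) ∈ box A B := IRAux.seg_mem A B h ⟨hu0, huv.trans hv1⟩
      have hsv : seg A B (((k:ℝ)+1)/n) ∈ box A B := IRAux.seg_mem A B h ⟨hu0.trans huv, hv1⟩
      have hXbox : X ∈ box A B := ⟨le_trans hsu.1 hX.1, le_trans hX.2 hsv.2⟩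
      have hd1 := IRAux.dist_le_of_box A B h hu0 huv hv1 hX
      have hd : dist X (seg A B ((k:ℝ)/n)) < δ := by
        have h2 : max (lo B - lo A) (hi B - hi A) * (((k:ℝ)+1)/n - (k:ℝ)/n)
            = max (lo B - lo A) (hi B - hi A) / n := by
          field_simp
          ring
        rw [h2] at hd1
        exact lt_of_le_of_lt hd1 hcn
      have := hδ X hXbox (seg A B ((k:ℝ)/n)) hsu hd
      rwa [Real.dist_eq] at this
    constructor
    · -- Riemann sum bound
      have hint : ∀ k < n, IntervalIntegrable (fun t => g (seg A B t))
          MeasureTheory.volume ((k:ℝ)/n) (((k+1:ℕ):ℝ)/n) := by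
        intro k hk
        obtain ⟨hu0, huv, hv1⟩ := perk k (Finset.mem_range.mpr hk)
        push_cast
        exact hInt _ _ hu0 huv hv1
      have hadj := intervalIntegral.sum_integral_adjacent_intervals
        (a := fun k : ℕ => (k:ℝ)/n) (f := fun t => g (seg A B t)) hint
      simp only [Nat.cast_zero, zero_div, div_self hnR.ne'] at hadj
      have hIsum : I = ∑ k ∈ Finset.range n,
          ∫ t in ((k:ℝ)/n)..(((k:ℝ)+1)/n), g (seg A B t) := by
        rw [hIdef, ← hadj]
        refine Finset.sum_congr rfl fun k _ => ?_
        push_cast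
        rfl
      rw [hIsum, Finset.mul_sum, ← Finset.sum_sub_distrib]
      refine le_trans (Finset.abs_sum_le_sum_abs _ _) ?_
      have hbound : ∀ k ∈ Finset.range n,
          |1/(n:ℝ) * g (seg A B ((k:ℝ)/n))
            - ∫ t in ((k:ℝ)/n)..(((k:ℝ)+1)/n), g (seg A B t)| ≤ ε * (1/n) := by
        intro k hk
        obtain ⟨hu0, huv, hv1⟩ := perk k hk
        have e1 : (∫ _ in ((k:ℝ)/n)..(((k:ℝ)+1)/n), g (seg A B ((k:ℝ)/n)))
            = 1/(n:ℝ) * g (seg A B ((k:ℝ)/n)) := by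
          rw [intervalIntegral.integral_const, smul_eq_mul]
          congr 1
          field_simp
          ring
        have e2 : 1/(n:ℝ) * g (seg A B ((k:ℝ)/n))
              - (∫ t in ((k:ℝ)/n)..(((k:ℝ)+1)/n), g (seg A B t))
            = ∫ t in ((k:ℝ)/n)..(((k:ℝ)+1)/n),
                (g (seg A B ((k:ℝ)/n)) - g (seg A B t)) := by
          rw [intervalIntegral.integral_sub intervalIntegrable_const
            (hInt _ _ hu0 huv hv1), e1]
        rw [e2]
        have hb := intervalIntegral.norm_integral_le_of_norm_le_const
          (a := (k:ℝ)/n) (b := ((k:ℝ)+1)/n) (C := ε)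
          (f := fun t => g (seg A B ((k:ℝ)/n)) - g (seg A B t)) ?_
        · rw [Real.norm_eq_abs] at hb
          refine le_trans hb ?_
          have : |((k:ℝ)+1)/n - (k:ℝ)/n| = 1/n := by
            rw [abs_of_nonneg (by linarith)]
            field_simp
            ring
          rw [this]
        · intro x hx
          rw [Set.uIoc_of_le huv] at hx
          have hxu : (k:ℝ)/n ≤ x := hx.1.le
          have hxv : x ≤ ((k:ℝ)+1)/n := hx.2
          have hXmem : seg A B x ∈ box (seg A B ((k:ℝ)/n)) (seg A B (((k:ℝ)+1)/n)) :=
            ⟨IRAux.seg_mono A B h hu0 hxu (hxv.trans hv1),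
             IRAux.seg_mono A B h (hu0.trans hxu) hxv hv1⟩
          have := claim k hk (seg A B x) hXmem
          rw [Real.norm_eq_abs, abs_sub_comm]
          exact this.le
      refine le_trans (Finset.sum_le_sum hbound) ?_
      rw [Finset.sum_const, Finset.card_range, nsmul_eq_mul]
      rw [mul_comm (ε) (1/(n:ℝ)), ← mul_assoc]
      rw [mul_one_div, div_self hnR.ne', one_mul]
    · -- inf sum vs point sum
      have hbound : ∀ k ∈ Finset.range n,
          |sInf (g '' box (seg A B ((k:ℝ)/n)) (seg A B (((k:ℝ)+1)/n)))
            - g (seg A B ((k:ℝ)/n))| ≤ ε := by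
        intro k hk
        obtain ⟨hu0, huv, hv1⟩ := perk k hk
        set S := g '' box (seg A B ((k:ℝ)/n)) (seg A B (((k:ℝ)+1)/n)) with hS
        have hmem : seg A B ((k:ℝ)/n) ∈ box (seg A B ((k:ℝ)/n)) (seg A B (((k:ℝ)+1)/n)) :=
          ⟨le_rfl, IRAux.seg_mono A B h hu0 huv hv1⟩
        have hgne : g (seg A B ((k:ℝ)/n)) ∈ S := ⟨_, hmem, rfl⟩
        have lb : ∀ y ∈ S, g (seg A B ((k:ℝ)/n)) - ε ≤ y := by
          rintro y ⟨X, hX, rfl⟩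
          have := (abs_lt.mp (claim k hk X hX)).1
          linarith
        have h1 : sInf S ≤ g (seg A B ((k:ℝ)/n)) := csInf_le ⟨_, lb⟩ hgne
        have h2 : g (seg A B ((k:ℝ)/n)) - ε ≤ sInf S := le_csInf ⟨_, hgne⟩ lb
        rw [abs_le]
        constructor <;> linarith
      rw [← mul_sub, ← Finset.sum_sub_distrib, abs_mul]
      have : |1/(n:ℝ)| = 1/n := abs_of_pos (by positivity)
      rw [this]
      refine le_trans (mul_le_mul_of_nonneg_left
        (le_trans (Finset.abs_sum_le_sum_abs _ _) (Finset.sum_le_sum hbound))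
        (by positivity : (0:ℝ) ≤ 1/n)) ?_
      rw [Finset.sum_const, Finset.card_range, nsmul_eq_mul]
      rw [← mul_assoc, mul_comm (1/(n:ℝ)) (n:ℝ), mul_one_div, div_self hnR.ne', one_mul]
  have T2 : Filter.Tendsto
      (fun n : ℕ => (1 / (n : ℝ)) * ∑ k ∈ Finset.range n, g (seg A B ((k : ℝ) / n)))
      Filter.atTop (nhds I) := by
    rw [Metric.tendsto_atTop]
    intro ε hε
    obtain ⟨N, hN⟩ := key (ε/2) (by linarith)
    refine ⟨N, fun n hn => ?_⟩
    have := (hN n hn).1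
    rw [Real.dist_eq]
    linarith
  refine ⟨?_, T2⟩
  rw [Metric.tendsto_atTop]
  intro ε hε
  obtain ⟨N, hN⟩ := key (ε/3) (by linarith)
  refine ⟨N, fun n hn => ?_⟩
  obtain ⟨h1, h2⟩ := hN n hn
  rw [Real.dist_eq]
  have habs := abs_sub_le
    ((1/(n:ℝ)) * ∑ k ∈ Finset.range n,
      sInf (g '' box (seg A B ((k:ℝ)/n)) (seg A B (((k:ℝ)+1)/n))))
    ((1/(n:ℝ)) * ∑ k ∈ Finset.range n, g (seg A B ((k:ℝ)/n))) I
  linarith
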